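/- For all π ∈ S_n' and all 1 ≤ i ≤ met(π), the prefix of s^i(π) strictly before the entry 0 equals the concatenation s(b_{π,i,1}) s(b_{π,i,2}) ... s(b_{π,i,|C_{π,i}|}); that is, s^i(π)[: ind_{s^i(π)}(0)] = s(b_{π,i,1}) s(b_{π,i,2}) ... s(b_{π,i,|C_{π,i}|}). -/

import Mathlib

noncomputable section
theorem foldrMaxMem (x : ℕ) (xs : List ℕ) : (x :: xs).foldr max 0 ∈ x :: xs := by
  induction xs generalizing x with
  | nil => simp
  | cons y ys ih =>
    rcases max_choice x ((y :: ys).foldr max 0) with h | h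
    · simp only [List.foldr_cons] at h ⊢
      rw [h]; exact List.mem_cons_self
    · simp only [List.foldr_cons] at h ⊢
      rw [h]; exact List.mem_cons_of_mem _ (ih y)
theorem takeWhileLt (l : List ℕ) (m : ℕ) (hm : m ∈ l) :
    (l.takeWhile (fun y => y ≠ m)).length < l.length := by
  have hd : l.dropWhile (fun y => y ≠ m) ≠ [] := by
    intro h; rw [List.dropWhile_eq_nil_iff] at h; simpa using h m hm
  have h1 : (l.takeWhile (fun y => y ≠ m)).length
      + (l.dropWhile (fun y => y ≠ m)).length = l.length := by
    rw [← List.length_append, List.takeWhile_append_dropWhile]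
  have h2 : 0 < (l.dropWhile (fun y => y ≠ m)).length := List.length_pos_iff.mpr hd
  omega
theorem dropWhileDropLt (l : List ℕ) (m : ℕ) (hl : l ≠ []) :
    ((l.dropWhile (fun y => y ≠ m)).drop 1).length < l.length := by
  have h1 : (l.takeWhile (fun y => y ≠ m)).length
      + (l.dropWhile (fun y => y ≠ m)).length = l.length := by
    rw [← List.length_append, List.takeWhile_append_dropWhile]
  have h2 : 0 < l.length := List.length_pos_iff.mpr hl
  rw [List.length_drop]; omega

/-- West's stack-sorting map `s`: `s([]) = []`, `s(L m R) = s(L) s(R) m` for `m` the maximum. -/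
def ss : List ℕ → List ℕ
  | [] => []
  | x :: xs =>
    ss ((x :: xs).takeWhile (fun y => y ≠ (x :: xs).foldr max 0)) ++
    ss (((x :: xs).dropWhile (fun y => y ≠ (x :: xs).foldr max 0)).drop 1) ++
    [(x :: xs).foldr max 0]
termination_by l => l.length
decreasing_by
  · exact takeWhileLt _ _ (foldrMaxMem _ _)
  · exact dropWhileDropLt _ _ (by simp)

/-- `met π` : the least `k ≥ 0` with `s^k(π)` increasing. -/
def met (l : List ℕ) : ℕ := sInf {k | List.Pairwise (· < ·) (ss^[k] l)}

/-- Right-to-left maxima of a list, read from left to right.  For the prefix of `s^{i-1}(π)`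
before `0` this is exactly the column sequence `C_{π,i}`. -/
def rtlMax : List ℕ → List ℕ
  | [] => []
  | x :: xs => if ∀ y ∈ xs, y < x then x :: rtlMax xs else rtlMax xs

/-- The blocks `b_{π,i,j}`: the segments strictly between consecutive right-to-left maxima. -/
def blocksOf : List ℕ → List (List ℕ)
  | [] => []
  | x :: xs =>
    if ∀ y ∈ xs, y < x then [] :: blocksOf xs
    else
      match blocksOf xs with
      | [] => [[x]]
      | b :: bs => (x :: b) :: bs

/-- The part of `s^{i-1}(π)` strictly before the entry `0`. -/
def prefixAt (π : List ℕ) (i : ℕ) : List ℕ := (ss^[i-1] π).takeWhile (fun x => x ≠ 0)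

/-- The column sequence `C_{π,i}`. -/
def colSeqAt (π : List ℕ) (i : ℕ) : List ℕ := rtlMax (prefixAt π i)

/-- The block sequence `B_{π,i}`. -/
def blocksAt (π : List ℕ) (i : ℕ) : List (List ℕ) := blocksOf (prefixAt π i)

/-- `col_π(v)`: the unique `i` with `v ∈ C_{π,i}` (as the least such `i ≥ 1`). -/
def colOf (π : List ℕ) (v : ℕ) : ℕ := sInf {i | 1 ≤ i ∧ v ∈ colSeqAt π i}

/-- `colpos_π(v)`: the (1-indexed) position of `v` in `C_{π,col_π(v)}`. -/
def colposOf (π : List ℕ) (v : ℕ) : ℕ := (colSeqAt π (colOf π v)).idxOf v + 1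

/-- `leftof_π(v) = c_{π,col_π(v)-1,j}` for the unique `j` with `v = max(b_{π,col_π(v)-1,j})`. -/
def leftOf (π : List ℕ) (v : ℕ) : ℕ :=
  (colSeqAt π (colOf π v - 1)).getD
    (((blocksAt π (colOf π v - 1)).map (fun b => b.foldr max 0)).idxOf v) 0

/-- `row_π(v)`: follow `leftof` back to column 1 and take `colpos` there. -/
def rowOf (π : List ℕ) (v : ℕ) : ℕ := colposOf π ((leftOf π)^[colOf π v - 1] v)

/-- `upof_π(v) = c_{π,col_π(v),colpos_π(v)-1}`. -/
def upOf (π : List ℕ) (v : ℕ) : ℕ := (colSeqAt π (colOf π v)).getD (colposOf π v - 2) 0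

/-- The stack-sorting tableau `T_π(v) = (col_π(v), row_π(v))`. -/
def Tmap (π : List ℕ) (v : ℕ) : ℕ × ℕ := (colOf π v, rowOf π v)

/-- The composition `α_π = (|{v ∈ [n] : row_π(v) = j}|)_{j=1}^{|C_{π,1}|}` (here `n = |π| - 1`). -/
def alphaOf (π : List ℕ) : List ℕ :=
  (List.range' 1 (colSeqAt π 1).length).map
    (fun j => ((Finset.Icc 1 (π.length - 1)).filter (fun v => rowOf π v = j)).card)

/-- Membership in the composition diagram `D(α) = {(i,j) : 1 ≤ j ≤ ℓ(α), 1 ≤ i ≤ α_j}`. -/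
def inDiagram (α : List ℕ) (p : ℕ × ℕ) : Prop :=
  1 ≤ p.1 ∧ 1 ≤ p.2 ∧ p.2 ≤ α.length ∧ p.1 ≤ α.getD (p.2 - 1) 0

instance inDiagramDec (α : List ℕ) : DecidablePred (inDiagram α) := fun p => by
  unfold inDiagram; infer_instance

/-- `D(α)` as a finite set. -/
def diagramFinset (α : List ℕ) : Finset (ℕ × ℕ) :=
  (Finset.range (α.foldr max 0 + 1) ×ˢ Finset.range (α.length + 1)).filter
    (fun p => inDiagram α p)

/-- `colpos_α(i,j) = |{(i,j') ∈ D(α) : j' < j} ∪ {(i,0)}|`. -/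
def colposA (α : List ℕ) (p : ℕ × ℕ) : ℕ :=
  (((Finset.range p.2).filter (fun j' => inDiagram α (p.1, j'))) ∪ {0}).card

/-- `leftof_α(i,j) = (i-1,j)`. -/
def leftA (p : ℕ × ℕ) : ℕ × ℕ := (p.1 - 1, p.2)

/-- `upof_α(i,j) = (i, max({j' < j : (i,j') ∈ D(α)} ∪ {0}))`. -/
def upA (α : List ℕ) (p : ℕ × ℕ) : ℕ × ℕ :=
  (p.1, (((Finset.range p.2).filter (fun j' => inDiagram α (p.1, j'))) ∪ {0}).sup id)

/-- The hook length `h_α(i,j)`. -/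
def hook (α : List ℕ) (p : ℕ × ℕ) : ℕ :=
  if 1 < p.1 then
    ((diagramFinset α).filter (fun q =>
      q.1 ≤ p.1 - 1 ∧ (upA α (p.1 - 1, p.2)).2 < q.2 ∧ q.2 ≤ p.2)).card
  else 1

/-- The segment `B_{π,T}(i,j,k)` of `s^{k-1}(π)`, where `U = T⁻¹`. -/
def Bseg (π : List ℕ) (α : List ℕ) (U : ℕ × ℕ → ℕ) (i j k : ℕ) : List ℕ :=
  if (upA α (leftA (i, j))).2 > 0 then
    ((ss^[k-1] π).take ((ss^[k-1] π).idxOf (U (k, j)) + 1)).drop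
      ((ss^[k-1] π).idxOf (U (k, (upA α (leftA (i, j))).2)) + 1)
  else
    (ss^[k-1] π).take ((ss^[k-1] π).idxOf (U (k, j)) + 1)

/-- The inverse `T_π⁻¹` of the stack-sorting tableau. -/
def invTmap (π : List ℕ) : ℕ × ℕ → ℕ :=
  Function.invFunOn (Tmap π) (Set.Icc 1 (π.length - 1))

/-- A linear extension of `D(α)`, encoded as the list `[T(1), …, T(n)]`:
`T` is a bijection `{1,…,n} → D(α)` with `T(a) ≥_D T(b) → a ≥ b`. -/
def isLinExt (α : List ℕ) (ℓ : List (ℕ × ℕ)) : Prop :=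
  ℓ.Nodup ∧ (∀ p, p ∈ ℓ ↔ inDiagram α p) ∧
  ∀ a b, a < ℓ.length → b < ℓ.length →
    (ℓ.getD a (0, 0)).1 ≤ (ℓ.getD b (0, 0)).1 ∧ (ℓ.getD a (0, 0)).2 ≤ (ℓ.getD b (0, 0)).2 →
    b ≤ a
end

section
lemma ss_nil : ss [] = [] := by rw [ss]

lemma ss_eq (l : List ℕ) (hl : l ≠ []) :
    ss l = ss (l.takeWhile (fun y => y ≠ l.foldr max 0)) ++
      ss ((l.dropWhile (fun y => y ≠ l.foldr max 0)).drop 1) ++ [l.foldr max 0] := by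
  cases l with
  | nil => exact absurd rfl hl
  | cons x xs => rw [ss]

lemma blocksOf_cons (x : ℕ) (xs : List ℕ) :
    blocksOf (x :: xs) = if ∀ y ∈ xs, y < x then [] :: blocksOf xs
    else match blocksOf xs with
      | [] => [[x]]
      | b :: bs => (x :: b) :: bs := by rw [blocksOf]

lemma le_foldr_max (l : List ℕ) : ∀ x ∈ l, x ≤ l.foldr max 0 := by
  induction l with
  | nil => simp
  | cons a t ih =>
    intro x hx
    rcases List.mem_cons.mp hx with h | h
    · subst h; exact le_max_left _ _
    · exact le_trans (ih x h) (le_max_right _ _)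

lemma takeWhile_split {α : Type*} (p : α → Bool) (l1 l2 : List α) (a : α)
    (h1 : ∀ x ∈ l1, p x = true) (h2 : p a = false) :
    (l1 ++ a :: l2).takeWhile p = l1 ∧ (l1 ++ a :: l2).dropWhile p = a :: l2 := by
  induction l1 with
  | nil => simp [List.takeWhile_cons, List.dropWhile_cons, h2]
  | cons y ys ih =>
    have hy : p y = true := h1 y (by simp)
    have h := ih (fun x hx => h1 x (by simp [hx]))
    constructor
    · simp [List.takeWhile_cons, hy, h.1]
    · simp [List.dropWhile_cons, hy, h.2]

lemma split_at_ne (l : List ℕ) (m : ℕ) (hm : m ∈ l) :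
    ∃ l1 l2, l = l1 ++ m :: l2 ∧ ∀ x ∈ l1, x ≠ m := by
  induction l with
  | nil => simp at hm
  | cons a t ih =>
    by_cases ha : a = m
    · subst ha
      exact ⟨[], t, by simp, by simp⟩
    · have hmt : m ∈ t := by
        rcases List.mem_cons.mp hm with h | h
        · exact absurd h.symm ha
        · exact h
      obtain ⟨l1, l2, he, hne⟩ := ih hmt
      refine ⟨a :: l1, l2, by simp [he], ?_⟩
      intro x hx
      rcases List.mem_cons.mp hx with h | h
      · subst h; exact ha
      · exact hne x h

lemma ss_split (m : ℕ) (l1 l2 : List ℕ) (hm : (l1 ++ m :: l2).foldr max 0 = m)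
    (hne : ∀ x ∈ l1, x ≠ m) :
    ss (l1 ++ m :: l2) = ss l1 ++ ss l2 ++ [m] := by
  have hnn : l1 ++ m :: l2 ≠ [] := by simp
  have h1 : ∀ x ∈ l1, (fun y => decide (y ≠ m)) x = true := by
    intro x hx; simp [hne x hx]
  have h2 : (fun y => decide (y ≠ m)) m = false := by simp
  have hsp := takeWhile_split (fun y => decide (y ≠ m)) l1 l2 m h1 h2
  rw [ss_eq _ hnn, hm]
  rw [hsp.1, hsp.2]
  simp

lemma ss_perm_aux : ∀ (N : ℕ) (l : List ℕ), l.length ≤ N → (ss l).Perm l := by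
  intro N
  induction N with
  | zero =>
    intro l h
    have : l = [] := List.length_eq_zero_iff.mp (Nat.le_zero.mp h)
    subst this; rw [ss_nil]
  | succ N ih =>
    intro l hlen
    rcases List.eq_nil_or_concat l with rfl | _
    · rw [ss_nil]
    cases hl : l with
    | nil => rw [ss_nil]
    | cons x xs =>
      subst hl
      have hm : (x :: xs).foldr max 0 ∈ x :: xs := foldrMaxMem x xs
      obtain ⟨l1, l2, he, hne⟩ := split_at_ne _ _ hm
      set m := (x :: xs).foldr max 0 with hmdef
      have hm' : (l1 ++ m :: l2).foldr max 0 = m := by rw [← he]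
      have hlens := congrArg List.length he
      simp at hlens hlen
      have hlen1 : l1.length ≤ N := by omega
      have hlen2 : l2.length ≤ N := by omega
      rw [he, ss_split m l1 l2 hm' hne]
      have pm : (l2 ++ [m]).Perm (m :: l2) := by
        have := List.perm_middle (a := m) (l₁ := l2) (l₂ := ([] : List ℕ))
        simpa using this
      rw [List.append_assoc]
      exact (ih l1 hlen1).append (((ih l2 hlen2).append (List.Perm.refl [m])).trans pm)

lemma ss_perm (l : List ℕ) : (ss l).Perm l := ss_perm_aux l.length l le_rfl

lemma iterate_ss_perm (k : ℕ) (l : List ℕ) : (ss^[k] l).Perm l := by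
  induction k with
  | zero => simp
  | succ k ih => rw [Function.iterate_succ_apply']; exact (ss_perm _).trans ih

lemma blocksOf_split (P1 P2 : List ℕ) (m : ℕ) (h1 : ∀ x ∈ P1, x < m) (h2 : ∀ x ∈ P2, x < m) :
    blocksOf (P1 ++ m :: P2) = P1 :: blocksOf P2 := by
  induction P1 with
  | nil =>
    rw [List.nil_append, blocksOf_cons, if_pos h2]
  | cons y ys ih =>
    have hy : y < m := h1 y (by simp)
    have hcond : ¬ ∀ z ∈ ys ++ m :: P2, z < y := by
      intro h; have := h m (by simp); omega
    rw [List.cons_append, blocksOf_cons, if_neg hcond, ih (fun x hx => h1 x (by simp [hx]))]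

lemma mem_blocksOf : ∀ (l b : List ℕ), b ∈ blocksOf l → ∀ x ∈ b, x ∈ l := by
  intro l
  induction l with
  | nil => intro b hb; simp [blocksOf] at hb
  | cons a t ih =>
    intro b hb x hx
    rw [blocksOf_cons] at hb
    by_cases hc : ∀ y ∈ t, y < a
    · rw [if_pos hc] at hb
      rcases List.mem_cons.mp hb with h | h
      · subst h; simp at hx
      · exact List.mem_cons_of_mem _ (ih b h x hx)
    · rw [if_neg hc] at hb
      rcases he : blocksOf t with _ | ⟨b0, bs⟩
      · rw [he] at hb; simp at hb
        subst hb; simp at hx; simp [hx]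
      · rw [he] at hb
        rcases List.mem_cons.mp hb with h | h
        · subst h
          rcases List.mem_cons.mp hx with h | h
          · simp [h]
          · exact List.mem_cons_of_mem _ (ih b0 (he ▸ List.mem_cons_self) x h)
        · exact List.mem_cons_of_mem _ (ih b (he ▸ List.mem_cons_of_mem _ h) x hx)
end

section
lemma key_lemma : ∀ (N : ℕ) (l : List ℕ), l.length ≤ N → l.Nodup → 0 ∈ l →
    ∃ T, ss l = ((blocksOf (l.takeWhile (fun x => x ≠ 0))).map ss).flatten ++ 0 :: T := by
  intro N
  induction N with
  | zero =>
    intro l h _ h0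
    have : l = [] := List.length_eq_zero_iff.mp (Nat.le_zero.mp h)
    subst this; simp at h0
  | succ N ih =>
    intro l hlen hnd h0
    -- split l at 0
    obtain ⟨P, R, heP, hPne⟩ := split_at_ne l 0 h0
    have hPtw : l.takeWhile (fun x => x ≠ 0) = P := by
      rw [heP]
      exact (takeWhile_split _ P R 0 (fun x hx => by simp [hPne x hx]) (by simp)).1
    set m := l.foldr max 0 with hmdef
    have hlnn : l ≠ [] := by rw [heP]; simp
    have hmem : m ∈ l := by
      rw [heP]; rw [heP] at hmdef
      cases P with
      | nil => exact hmdef ▸ foldrMaxMem _ _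
      | cons a t => exact hmdef ▸ foldrMaxMem _ _
    by_cases hm0 : m = 0
    · -- all entries ≤ 0, so l = [0]
      have hP : P = [] := by
        cases P with
        | nil => rfl
        | cons a t =>
          exfalso
          have ha : a ∈ l := by rw [heP]; simp
          have := le_foldr_max l a ha
          rw [← hmdef, hm0] at this
          exact hPne a (by simp) (Nat.le_zero.mp this)
      have hR : R = [] := by
        cases R with
        | nil => rfl
        | cons a t =>
          exfalso
          have ha : a ∈ l := by rw [heP]; simp
          have := le_foldr_max l a ha
          rw [← hmdef, hm0] at this
          have ha0 : a = 0 := Nat.le_zero.mp this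
          rw [heP, hP, ha0] at hnd
          simp at hnd
      subst hP; subst hR
      rw [heP]
      refine ⟨[], ?_⟩
      have hss0 : ss [0] = [0] := by
        rw [ss_eq [0] (by simp)]
        simp [ss_nil]
      simp [hss0, blocksOf, List.takeWhile_cons]
    · by_cases hmP : m ∈ P
      · -- max inside the prefix
        obtain ⟨P1, P2, heP2, hP1ne⟩ := split_at_ne P m hmP
        have heL : l = P1 ++ m :: (P2 ++ 0 :: R) := by rw [heP, heP2]; simp
        have hm' : (P1 ++ m :: (P2 ++ 0 :: R)).foldr max 0 = m := by rw [← heL]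
        have hss : ss l = ss P1 ++ ss (P2 ++ 0 :: R) ++ [m] :=
          heL ▸ ss_split m P1 (P2 ++ 0 :: R) hm' hP1ne
        -- IH on P2 ++ 0 :: R
        have hlen' : (P2 ++ 0 :: R).length ≤ N := by
          have := congrArg List.length heL
          simp at this hlen; simp; omega
        have hnd' : (P2 ++ 0 :: R).Nodup := by
          rw [heL] at hnd
          exact ((List.sublist_append_right (P1 ++ [m]) (P2 ++ 0 :: R)).nodup
            (by simpa using hnd))
        obtain ⟨T', hT'⟩ := ih (P2 ++ 0 :: R) hlen' hnd' (by simp)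
        have hP2ne : ∀ x ∈ P2, x ≠ 0 := fun x hx => hPne x (by rw [heP2]; simp [hx])
        have htw2 : (P2 ++ 0 :: R).takeWhile (fun x => x ≠ 0) = P2 :=
          (takeWhile_split _ P2 R 0 (fun x hx => by simp [hP2ne x hx]) (by simp)).1
        rw [htw2] at hT'
        -- blocks
        have hmnotP1 : m ∉ P1 := fun h => hP1ne m h rfl
        have hmnot2 : m ∉ P2 ++ 0 :: R := by
          rw [heL] at hnd
          have h2 := (List.nodup_append.mp hnd).2.1
          simp at h2 ⊢
          tauto
        have hlt : ∀ x ∈ P1 ++ (P2 ++ 0 :: R), x < m := by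
          intro x hx
          have hxl : x ∈ l := by rw [heL]; simp at hx ⊢; tauto
          have hle := le_foldr_max l x hxl
          rw [← hmdef] at hle
          rcases List.mem_append.mp hx with h | h
          · have : x ≠ m := hP1ne x h
            omega
          · have : x ≠ m := fun hh => hmnot2 (hh ▸ h)
            omega
        have hlt1 : ∀ x ∈ P1, x < m := fun x hx => hlt x (by simp [hx])
        have hlt2 : ∀ x ∈ P2, x < m := fun x hx => hlt x (by simp [hx])
        have hblocks : blocksOf P = P1 :: blocksOf P2 := by
          rw [heP2]; exact blocksOf_split P1 P2 m hlt1 hlt2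
        refine ⟨T' ++ [m], ?_⟩
        rw [hss, hT', hPtw, hblocks]
        simp
      · -- max after the 0
        have hmR : m ∈ R := by
          rw [heP] at hmem
          rcases List.mem_append.mp hmem with h | h
          · exact absurd h hmP
          · rcases List.mem_cons.mp h with h' | h'
            · exact absurd h' hm0
            · exact h'
        obtain ⟨R1, R2, heR, hR1ne⟩ := split_at_ne R m hmR
        have heL : l = (P ++ 0 :: R1) ++ m :: R2 := by rw [heP, heR]; simp
        have hm' : ((P ++ 0 :: R1) ++ m :: R2).foldr max 0 = m := by rw [← heL]
        have hAne : ∀ x ∈ P ++ 0 :: R1, x ≠ m := by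
          intro x hx
          rcases List.mem_append.mp hx with h | h
          · exact fun hh => hmP (hh ▸ h)
          · rcases List.mem_cons.mp h with h' | h'
            · exact fun hh => hm0 (hh ▸ h'.symm ▸ rfl)
            · exact hR1ne x h'
        have hss : ss l = ss (P ++ 0 :: R1) ++ ss R2 ++ [m] :=
          heL ▸ ss_split m (P ++ 0 :: R1) R2 hm' hAne
        have hlen' : (P ++ 0 :: R1).length ≤ N := by
          have := congrArg List.length heL
          simp at this hlen; simp; omega
        have hnd' : (P ++ 0 :: R1).Nodup := by
          rw [heL] at hnd
          exact (List.sublist_append_left (P ++ 0 :: R1) (m :: R2)).nodup hnd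
        obtain ⟨T', hT'⟩ := ih (P ++ 0 :: R1) hlen' hnd' (by simp)
        have htwA : (P ++ 0 :: R1).takeWhile (fun x => x ≠ 0) = P :=
          (takeWhile_split _ P R1 0 (fun x hx => by simp [hPne x hx]) (by simp)).1
        rw [htwA] at hT'
        refine ⟨T' ++ ss R2 ++ [m], ?_⟩
        rw [hss, hT', hPtw]
        simp
end

/-- Lemma 3.3: for `π ∈ Sₙ'` and `1 ≤ i ≤ met(π)`, the prefix of `s^i(π)` before `0`
equals `s(b_{π,i,1}) ⋯ s(b_{π,i,|C_{π,i}|})`. -/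
theorem stmt_7 (n : ℕ) (π : List ℕ) (hπ : π.Perm (List.range (n + 1)))
    (h0 : π.getLast? = some 0) (i : ℕ) (hi : 1 ≤ i) (him : i ≤ met π) :
    (ss^[i] π).takeWhile (fun x => x ≠ 0) = ((blocksAt π i).map ss).flatten := by
  have hiter : ss^[i] π = ss (ss^[i-1] π) := by
    conv_lhs => rw [show i = (i-1)+1 by omega]
    rw [Function.iterate_succ_apply']
  have hperm : (ss^[i-1] π).Perm (List.range (n+1)) := (iterate_ss_perm _ _).trans hπ
  have hnd : (ss^[i-1] π).Nodup := hperm.nodup_iff.mpr List.nodup_range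
  have h0σ : 0 ∈ ss^[i-1] π := hperm.mem_iff.mpr (by simp)
  obtain ⟨T, hT⟩ := key_lemma (ss^[i-1] π).length (ss^[i-1] π) le_rfl hnd h0σ
  rw [hiter, hT]
  unfold blocksAt prefixAt
  refine (takeWhile_split _ _ T 0 ?_ (by simp)).1
  intro x hx
  simp only [List.mem_flatten, List.mem_map] at hx
  obtain ⟨b', ⟨b, hb, rfl⟩, hxb⟩ := hx
  have hxb' : x ∈ b := (ss_perm b).mem_iff.mp hxb
  have hxP := mem_blocksOf _ b hb x hxb'
  have := List.mem_takeWhile_imp hxP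
  simpa using this
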